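/- arXiv:2107.02432 — 2 statements merged into one kernel-verified Lean document; each statement's English description precedes it below -/
import Mathlib

section
/- Let P be a real m×n matrix of rank n, A a real d×n matrix of rank d, c ∈ ℝ^d, and let r, r' ∈ ℝ^m have strictly positive entries with r'_i ≥ r_i for all i. Let Δ̃ attain the minimum of ∑_{i=1}^m r_i (Px)_i² over {x : Ax = c}, and write Ψ(s) = min{ ∑_i s_i (Px)_i² : Ax = c }. Then Ψ(r') ≥ Ψ(r) + ∑_{i=1}^m (1 − r_i/r'_i)·r_i·(PΔ̃)_i². -/
open scoped BigOperators

/-- pointwise inequality: b y² ≥ (1 - a/b) a z² + a z² + 2 a z (y - z). -/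
lemma energy_pointwise (a b y z : ℝ) (hb : 0 < b) :
    (1 - a / b) * (a * z ^ 2) + (a * z ^ 2 + 2 * (a * (z * (y - z)))) ≤ b * y ^ 2 := by
  have h1 : (1 - a / b) = (b - a) / b := by field_simp
  rw [h1, div_mul_eq_mul_div, div_add' _ _ _ hb.ne', div_le_iff₀ hb]
  nlinarith [sq_nonneg (b * y - a * z), sq_nonneg (y - z), hb]

/-- Lemma D.2 (energy increase): if r' ≥ r, then
Ψ(r') ≥ Ψ(r) + ∑ᵢ (1 − rᵢ/r'ᵢ)·rᵢ·(PΔ̃)ᵢ². -/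
theorem energy_increase
    (m n d : ℕ) (P : Matrix (Fin m) (Fin n) ℝ) (A : Matrix (Fin d) (Fin n) ℝ)
    (c : Fin d → ℝ) (hP : P.rank = n) (hA : A.rank = d)
    (r r' : Fin m → ℝ) (hr : ∀ i, 0 < r i) (hr' : ∀ i, 0 < r' i)
    (hle : ∀ i, r i ≤ r' i)
    (Δt : Fin n → ℝ) (hΔA : A.mulVec Δt = c)
    (hΔmin : ∀ x : Fin n → ℝ, A.mulVec x = c →
      (∑ i, r i * (P.mulVec Δt) i ^ 2) ≤ ∑ i, r i * (P.mulVec x) i ^ 2) :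
    sInf {v : ℝ | ∃ x : Fin n → ℝ, A.mulVec x = c ∧
        v = ∑ i, r' i * (P.mulVec x) i ^ 2} ≥
      sInf {v : ℝ | ∃ x : Fin n → ℝ, A.mulVec x = c ∧
        v = ∑ i, r i * (P.mulVec x) i ^ 2} +
      ∑ i, (1 - r i / r' i) * (r i * (P.mulVec Δt) i ^ 2) := by
  classical
  set z := P.mulVec Δt with hz
  -- the r-set has a least element
  have hleast : IsLeast {v : ℝ | ∃ x : Fin n → ℝ, A.mulVec x = c ∧
      v = ∑ i, r i * (P.mulVec x) i ^ 2} (∑ i, r i * z i ^ 2) := by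
    constructor
    · exact ⟨Δt, hΔA, rfl⟩
    · rintro v ⟨x, hx, rfl⟩
      exact hΔmin x hx
  have hInfr : sInf {v : ℝ | ∃ x : Fin n → ℝ, A.mulVec x = c ∧
      v = ∑ i, r i * (P.mulVec x) i ^ 2} = ∑ i, r i * z i ^ 2 := hleast.csInf_eq
  rw [hInfr, ge_iff_le]
  refine le_csInf ⟨∑ i, r' i * z i ^ 2, ⟨Δt, hΔA, rfl⟩⟩ ?_
  rintro v ⟨x, hx, rfl⟩
  set y := P.mulVec x with hy
  -- orthogonality: ∑ r z (y - z) = 0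
  have hortho : (∑ i, r i * (z i * (y i - z i))) = 0 := by
    set b := ∑ i, r i * (z i * (y i - z i)) with hb
    set a := ∑ i, r i * (y i - z i) ^ 2 with ha
    have hquad : ∀ t : ℝ, 0 ≤ a * (t * t) + (2 * b) * t + 0 := by
      intro t
      have hfeas : A.mulVec (Δt + t • (x - Δt)) = c := by
        rw [Matrix.mulVec_add, Matrix.mulVec_smul, Matrix.mulVec_sub, hΔA, hx]
        simp
      have hmin := hΔmin _ hfeas
      have hPv : P.mulVec (Δt + t • (x - Δt)) = fun i => z i + t * (y i - z i) := by
        funext i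
        rw [Matrix.mulVec_add, Matrix.mulVec_smul, Matrix.mulVec_sub]
        simp [hz, hy, mul_sub]
      rw [hPv] at hmin
      have hexp : (∑ i, r i * (z i + t * (y i - z i)) ^ 2)
          = (∑ i, r i * z i ^ 2) + (a * (t * t) + (2 * b) * t + 0) := by
        rw [ha, hb]
        simp only [Finset.sum_mul, Finset.mul_sum, ← Finset.sum_add_distrib, add_zero]
        exact Finset.sum_congr rfl fun i _ => by ring
      rw [hexp] at hmin
      linarith
    have hdisc := discrim_le_zero hquad
    have : (2 * b) ^ 2 - 4 * a * 0 ≤ 0 := hdisc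
    nlinarith [sq_nonneg b]
  -- pointwise bound summed up
  have hpt : ∀ i, (1 - r i / r' i) * (r i * z i ^ 2)
      + (r i * z i ^ 2 + 2 * (r i * (z i * (y i - z i)))) ≤ r' i * y i ^ 2 :=
    fun i => energy_pointwise (r i) (r' i) (y i) (z i) (hr' i)
  have hsum := Finset.sum_le_sum (fun i (_ : i ∈ Finset.univ) => hpt i)
  rw [Finset.sum_add_distrib, Finset.sum_add_distrib, ← Finset.mul_sum, hortho] at hsum
  linarith [hsum]
end

section
/- Let P be a real m×n matrix of rank n, A a real d×n matrix of rank d, c ∈ ℝ^d, and let r, r' ∈ ℝ^m have strictly positive entries with r'_i ≤ r_i for all i. Let Δ̃ attain the minimum of ∑_{i=1}^m r_i (Px)_i² over {x : Ax = c}, and write Ψ(s) = min{ ∑_i s_i (Px)_i² : Ax = c }. Then Ψ(r') ≤ Ψ(r) − (1/2)·∑_{i=1}^m (1 − r'_i/r_i)·r_i·(PΔ̃)_i². -/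
open scoped BigOperators

/-- Lemma D.1 (energy decrease): if r' ≤ r, then
Ψ(r') ≤ Ψ(r) − (1/2)·∑ᵢ (1 − r'ᵢ/rᵢ)·rᵢ·(PΔ̃)ᵢ². -/
theorem energy_decrease
    (m n d : ℕ) (P : Matrix (Fin m) (Fin n) ℝ) (A : Matrix (Fin d) (Fin n) ℝ)
    (c : Fin d → ℝ) (hP : P.rank = n) (hA : A.rank = d)
    (r r' : Fin m → ℝ) (hr : ∀ i, 0 < r i) (hr' : ∀ i, 0 < r' i)
    (hle : ∀ i, r' i ≤ r i)
    (Δt : Fin n → ℝ) (hΔA : A.mulVec Δt = c)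
    (hΔmin : ∀ x : Fin n → ℝ, A.mulVec x = c →
      (∑ i, r i * (P.mulVec Δt) i ^ 2) ≤ ∑ i, r i * (P.mulVec x) i ^ 2) :
    sInf {v : ℝ | ∃ x : Fin n → ℝ, A.mulVec x = c ∧
        v = ∑ i, r' i * (P.mulVec x) i ^ 2} ≤
      sInf {v : ℝ | ∃ x : Fin n → ℝ, A.mulVec x = c ∧
        v = ∑ i, r i * (P.mulVec x) i ^ 2} -
      (1 / 2) * ∑ i, (1 - r' i / r i) * (r i * (P.mulVec Δt) i ^ 2) := by
  set V : ℝ := ∑ i, r i * (P.mulVec Δt) i ^ 2 with hV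
  set S : ℝ := ∑ i, (1 - r' i / r i) * (r i * (P.mulVec Δt) i ^ 2) with hS
  have hSeq : S = ∑ i, (r i - r' i) * (P.mulVec Δt) i ^ 2 := by
    apply Finset.sum_congr rfl
    intro i _
    have h : r i ≠ 0 := (hr i).ne'
    field_simp
  have hSnn : 0 ≤ S := by
    rw [hSeq]
    apply Finset.sum_nonneg
    intro i _
    exact mul_nonneg (by linarith [hle i]) (sq_nonneg _)
  -- Ψ(r') ≤ ∑ r' (PΔt)²
  have h1 : sInf {v : ℝ | ∃ x : Fin n → ℝ, A.mulVec x = c ∧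
      v = ∑ i, r' i * (P.mulVec x) i ^ 2} ≤ ∑ i, r' i * (P.mulVec Δt) i ^ 2 := by
    apply csInf_le
    · refine ⟨0, ?_⟩
      rintro v ⟨x, _, rfl⟩
      exact Finset.sum_nonneg fun i _ => mul_nonneg (hr' i).le (sq_nonneg _)
    · exact ⟨Δt, hΔA, rfl⟩
  -- V ≤ Ψ(r)
  have h2 : V ≤ sInf {v : ℝ | ∃ x : Fin n → ℝ, A.mulVec x = c ∧
      v = ∑ i, r i * (P.mulVec x) i ^ 2} := by
    refine le_csInf ⟨V, ⟨Δt, hΔA, hV⟩⟩ ?_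
    rintro v ⟨x, hx, rfl⟩
    exact hΔmin x hx
  have h3 : ∑ i, r' i * (P.mulVec Δt) i ^ 2 = V - S := by
    rw [hSeq, hV, ← Finset.sum_sub_distrib]
    apply Finset.sum_congr rfl
    intro i _
    ring
  linarith
end
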